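/- arXiv:2112.13897 — 2 statements merged into one kernel-verified Lean document; each statement's English description precedes it below -/
import Mathlib

section
/- In the inverse system A_i = ℤ with bonding maps multiplication by 9, an element (a_i) of ∏_i ℤ lies in the image of Φ (where Φ((a_i)) = (a_i − 9·a_{i+1})) if and only if the associated 3-adic series Σ_{i≥0} 9^i a_i converges to an element of ℤ ⊆ ℤ̂₃, i.e., the partial sums s_n = Σ_{i=0}^{n} 9^i a_i are eventually congruent to a fixed integer modulo arbitrarily high powers of 3. -/
open Filter

/-- For the inverse system `Aᵢ = ℤ` with bonding maps multiplication by `9`, a sequence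
`(aᵢ)` lies in the image of `Φ((bᵢ)) = (bᵢ − 9·bᵢ₊₁)` if and only if the `3`-adic series
`Σᵢ 9ⁱ aᵢ` converges in `ℤ̂₃` to an element of `ℤ ⊆ ℤ̂₃` (i.e. the partial sums are
eventually congruent to a fixed integer modulo arbitrarily high powers of `3`). -/
theorem mem_range_Phi_iff_series_integral (a : ℕ → ℤ) :
    (∃ b : ℕ → ℤ, ∀ i, b i - 9 * b (i + 1) = a i) ↔
      ∃ z : ℤ, Tendsto
        (fun n => (∑ i ∈ Finset.range n, (9 : ℤ_[3]) ^ i * (a i : ℤ_[3]))) atTop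
        (nhds (z : ℤ_[3])) := by
  set S : ℕ → ℤ := fun n => ∑ i ∈ Finset.range n, 9 ^ i * a i with hS
  have hcast : ∀ n, (∑ i ∈ Finset.range n, (9 : ℤ_[3]) ^ i * (a i : ℤ_[3])) = ((S n : ℤ) : ℤ_[3]) := by
    intro n; simp [hS]
  constructor
  · rintro ⟨b, hb⟩
    refine ⟨b 0, ?_⟩
    have key : ∀ n, S n = b 0 - 9 ^ n * b n := by
      intro n
      induction n with
      | zero => simp [hS]
      | succ n ih =>
        have : S (n + 1) = S n + 9 ^ n * a n := by
          simp [hS, Finset.sum_range_succ]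
        rw [this, ih, ← hb n]; ring
    have h9 : Tendsto (fun n => (9 : ℤ_[3]) ^ n * (b n : ℤ_[3])) atTop (nhds 0) := by
      apply squeeze_zero_norm (a := fun n => ‖(9 : ℤ_[3])‖ ^ n)
      · intro n
        calc ‖(9 : ℤ_[3]) ^ n * (b n : ℤ_[3])‖ ≤ ‖(9 : ℤ_[3]) ^ n‖ * ‖((b n : ℤ) : ℤ_[3])‖ :=
              norm_mul_le _ _
          _ ≤ ‖(9 : ℤ_[3])‖ ^ n * 1 := by
              gcongr
              · exact norm_pow_le _ _
              · exact PadicInt.norm_le_one _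
          _ = ‖(9 : ℤ_[3])‖ ^ n := mul_one _
      · apply tendsto_pow_atTop_nhds_zero_of_norm_lt_one
        rw [norm_norm]
        have : ((9 : ℤ_[3])) = (((9 : ℤ)) : ℤ_[3]) := by norm_num
        rw [this, PadicInt.norm_int_lt_one_iff_dvd]
        decide
    have := (tendsto_const_nhds (x := ((b 0 : ℤ) : ℤ_[3])) (f := atTop)).sub h9
    simp only [sub_zero] at this
    convert this using 2 with n
    rw [hcast, key n]
    push_cast; ring
  · rintro ⟨z, hz⟩
    have hdvd : ∀ n, (3 ^ (2 * n) : ℤ) ∣ (z - S n) := by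
      intro n
      have key : ‖((z - S n : ℤ) : ℤ_[3])‖ ≤ ((3:ℕ) : ℝ) ^ (-(2*n : ℕ) : ℤ) → (3 ^ (2*n) : ℤ) ∣ (z - S n) := by
        intro h
        have := (PadicInt.norm_int_le_pow_iff_dvd (p := 3)).mp h
        exact_mod_cast this
      apply key
      have hball : ∀ m, n ≤ m → ‖((S m - S n : ℤ) : ℤ_[3])‖ ≤ (3 : ℝ) ^ (-(2*n) : ℤ) := by
        intro m hm
        apply (PadicInt.norm_int_le_pow_iff_dvd (p := 3)).mpr
        push_cast
        have : S m - S n = ∑ i ∈ Finset.Ico n m, 9 ^ i * a i := by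
          simp [hS, Finset.sum_Ico_eq_sub _ hm]
        rw [this]
        apply Finset.dvd_sum
        intro i hi
        have hni : n ≤ i := (Finset.mem_Ico.mp hi).1
        have h99 : (9 : ℤ) ^ i = 3 ^ (2 * n) * 9 ^ (i - n) := by
          rw [show (3:ℤ) ^ (2*n) = 9 ^ n by rw [pow_mul]; norm_num, ← pow_add]
          congr 1; omega
        rw [h99, mul_assoc]
        exact dvd_mul_right _ _
      -- z - S n is the limit of S m - S n, norms ≤ bound
      have hlim : Tendsto (fun m => ((S m - S n : ℤ) : ℤ_[3])) atTop
          (nhds ((z - S n : ℤ) : ℤ_[3])) := by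
        push_cast
        exact (by simpa [hcast] using hz : Tendsto (fun m => ((S m : ℤ) : ℤ_[3])) atTop (nhds ((z:ℤ_[3])))).sub tendsto_const_nhds
      have : Tendsto (fun m => ‖((S m - S n : ℤ) : ℤ_[3])‖) atTop
          (nhds ‖((z - S n : ℤ) : ℤ_[3])‖) := hlim.norm
      apply le_of_tendsto this
      filter_upwards [eventually_ge_atTop n] with m hm using hball m hm
    choose c hc using hdvd
    refine ⟨c, fun n => ?_⟩
    have h1 := hc n
    have h2 := hc (n + 1)
    have hstep : S (n + 1) = S n + 9 ^ n * a n := by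
      simp [hS, Finset.sum_range_succ]
    have h9 : (9 : ℤ) ^ n = 3 ^ (2 * n) := by rw [pow_mul]; norm_num
    have h2' : (3:ℤ) ^ (2 * (n+1)) = 3 ^ (2*n) * 9 := by rw [mul_add, pow_add]; norm_num
    rw [h2'] at h2
    rw [h9] at hstep
    have : (3 : ℤ) ^ (2 * n) * (c n - 9 * c (n + 1)) = 3 ^ (2 * n) * a n := by
      linear_combination h2 - h1 + hstep
    have h3 : (3 : ℤ) ^ (2 * n) ≠ 0 := by positivity
    exact mul_left_cancel₀ h3 this
end

section
/- The quotient group ℤ̂₃ / ℤ (3-adic integers modulo the integers) is an uncountable divisible abelian group; in particular it is nonzero. -/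
open Cardinal in
lemma cantorSpace_uncountable : Uncountable (ℕ → Bool) := by
  rw [← Cardinal.aleph0_lt_mk_iff]
  have : #(ℕ → Bool) = 2 ^ ℵ₀ := by
    rw [← Cardinal.power_def, Cardinal.mk_bool, Cardinal.mk_nat]
  rw [this]
  exact Cardinal.cantor ℵ₀

lemma perfect_univ_padicInt : Perfect (Set.univ : Set ℤ_[3]) := by
  refine ⟨isClosed_univ, ?_⟩
  rw [preperfect_iff_nhds]
  intro x _ U hU
  obtain ⟨ε, εpos, hball⟩ := Metric.mem_nhds_iff.mp hU
  have h3 : ‖(3 : ℤ_[3])‖ < 1 := by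
    have := PadicInt.norm_p (p := 3)
    rw [show ((3:ℕ) : ℤ_[3]) = (3 : ℤ_[3]) by norm_cast] at this
    rw [this]
    norm_num
  obtain ⟨n, hn⟩ := exists_pow_lt_of_lt_one εpos h3
  refine ⟨x + 3 ^ n, ⟨hball ?_, trivial⟩, ?_⟩
  · rw [Metric.mem_ball, dist_eq_norm]
    simpa [norm_pow] using hn
  · intro h
    have h3ne : (3 : ℤ_[3]) ^ n ≠ 0 := pow_ne_zero _ (by norm_num)
    apply h3ne
    have := congrArg (fun z => z - x) h
    simpa using this

lemma padicInt_uncountable : Uncountable ℤ_[3] := by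
  obtain ⟨f, -, -, hinj⟩ :=
    perfect_univ_padicInt.exists_nat_bool_injection ⟨0, trivial⟩
  have := cantorSpace_uncountable
  exact hinj.uncountable

/-- The quotient group `ℤ̂₃/ℤ` of the `3`-adic integers by the (diagonally embedded) integers
is an uncountable divisible abelian group; in particular it is nonzero. -/
theorem padicInt_quotient_int_uncountable_divisible :
    ¬ Countable (ℤ_[3] ⧸ (AddMonoidHom.range (Int.castAddHom ℤ_[3]))) ∧
      (∀ (d : ℤ_[3] ⧸ (AddMonoidHom.range (Int.castAddHom ℤ_[3]))) (n : ℕ), 0 < n →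
        ∃ x, n • x = d) ∧
      Nontrivial (ℤ_[3] ⧸ (AddMonoidHom.range (Int.castAddHom ℤ_[3]))) := by
  set S := AddMonoidHom.range (Int.castAddHom ℤ_[3]) with hS
  haveI : Countable S := by
    have hsurj : Function.Surjective
        (fun k : ℤ => (⟨(k : ℤ_[3]), ⟨k, rfl⟩⟩ : S)) := by
      rintro ⟨_, k, rfl⟩
      exact ⟨k, rfl⟩
    exact hsurj.countable
  haveI := padicInt_uncountable
  have huncount : ¬ Countable (ℤ_[3] ⧸ S) := by
    intro hQ
    have : Countable ℤ_[3] :=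
      Countable.of_equiv _ (AddSubgroup.addGroupEquivQuotientProdAddSubgroup (s := S)).symm
    exact (Uncountable.not_countable (α := ℤ_[3])) this
  refine ⟨huncount, ?_, ?_⟩
  · intro d n hn
    obtain ⟨x, rfl⟩ := QuotientAddGroup.mk_surjective d
    set a := n.factorization 3 with ha
    have hspec := PadicInt.appr_spec a x
    rw [Ideal.mem_span_singleton] at hspec
    obtain ⟨c, hc⟩ := hspec
    push_cast at hc
    set m : ℕ := n / 3 ^ a with hm
    have hmd : ¬ (3 ∣ m) := Nat.not_dvd_ordCompl (by norm_num) hn.ne'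
    have hu : IsUnit ((m : ℤ_[3])) := by
      rw [PadicInt.isUnit_iff]
      refine le_antisymm (PadicInt.norm_le_one _) (not_lt.mp ?_)
      intro hlt
      have : ((3 : ℕ) : ℤ) ∣ (m : ℤ) := by
        have := (PadicInt.norm_int_lt_one_iff_dvd (p := 3) (m : ℤ)).mp (by
          simpa using hlt)
        exact_mod_cast this
      exact hmd (by exact_mod_cast this)
    set u := hu.unit with hudef
    have hucoe : (u : ℤ_[3]) = (m : ℤ_[3]) := hu.unit_spec
    set y : ℤ_[3] := (↑u⁻¹ : ℤ_[3]) * c with hy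
    refine ⟨QuotientAddGroup.mk y, ?_⟩
    have hny : (n : ℤ_[3]) * y = x - ((x.appr a : ℕ) : ℤ_[3]) := by
      have hcast : ((n : ℕ) : ℤ_[3]) = (3 : ℤ_[3]) ^ a * (m : ℤ_[3]) := by
        conv_lhs => rw [← Nat.ordProj_mul_ordCompl_eq_self n 3]
        push_cast [ha, hm]
        ring
      rw [hcast, ← hucoe, hy]
      have : (u : ℤ_[3]) * ((↑u⁻¹ : ℤ_[3]) * c) = c := by
        rw [← mul_assoc, Units.mul_inv, one_mul]
      rw [mul_assoc, this, ← hc]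
    have hmk : (n • (QuotientAddGroup.mk y : ℤ_[3] ⧸ S)) =
        QuotientAddGroup.mk (n • y) := by
      exact (QuotientAddGroup.mk_nsmul S y n).symm
    rw [hmk]
    rw [QuotientAddGroup.eq]
    refine ⟨(x.appr a : ℤ), ?_⟩
    have : -(n • y) + x = ((x.appr a : ℕ) : ℤ_[3]) := by
      rw [nsmul_eq_mul, hny]
      ring
    rw [this]
    simp
  · rw [← not_subsingleton_iff_nontrivial]
    intro h
    exact huncount (by infer_instance)
end
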